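/- If a hyperelastic energy has the form W(F) = Ψ(‖dev_n log U‖, |tr(log U)|) with U = √(FᵀF), then W satisfies the tension-compression symmetry W(F⁻¹) = W(F) for all F ∈ GL⁺(n). -/

import Mathlib

open Matrix
open scoped Classical

/-- Matrix exponential on real `n × n` matrices. -/
noncomputable def mexp {n : ℕ} (X : Matrix (Fin n) (Fin n) ℝ) : Matrix (Fin n) (Fin n) ℝ :=
  NormedSpace.exp X

/-- Symmetric part. -/
noncomputable def symPart {n : ℕ} (X : Matrix (Fin n) (Fin n) ℝ) : Matrix (Fin n) (Fin n) ℝ :=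
  (1 / 2 : ℝ) • (X + Xᵀ)

/-- Skew-symmetric part. -/
noncomputable def skewPart {n : ℕ} (X : Matrix (Fin n) (Fin n) ℝ) : Matrix (Fin n) (Fin n) ℝ :=
  (1 / 2 : ℝ) • (X - Xᵀ)

/-- Deviatoric (trace-free) part. -/
noncomputable def devPart {n : ℕ} (X : Matrix (Fin n) (Fin n) ℝ) : Matrix (Fin n) (Fin n) ℝ :=
  X - (X.trace / n) • (1 : Matrix (Fin n) (Fin n) ℝ)

/-- Squared Frobenius norm. -/
noncomputable def frobSq {n : ℕ} (X : Matrix (Fin n) (Fin n) ℝ) : ℝ := (Xᵀ * X).trace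

/-- Frobenius norm. -/
noncomputable def frobNorm {n : ℕ} (X : Matrix (Fin n) (Fin n) ℝ) : ℝ := Real.sqrt (frobSq X)

/-- Principal matrix logarithm: the symmetric matrix `X` with `mexp X = P`, when it exists. -/
noncomputable def matLog {n : ℕ} (P : Matrix (Fin n) (Fin n) ℝ) : Matrix (Fin n) (Fin n) ℝ :=
  if h : ∃ X : Matrix (Fin n) (Fin n) ℝ, X.IsSymm ∧ mexp X = P then h.choose else 0

namespace TCSaux

variable {n : ℕ}

lemma mexp_transpose (X : Matrix (Fin n) (Fin n) ℝ) : (mexp X)ᵀ = mexp Xᵀ :=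
  (Matrix.exp_transpose X).symm

lemma mexp_isSymm {X : Matrix (Fin n) (Fin n) ℝ} (hX : X.IsSymm) : (mexp X).IsSymm := by
  rw [Matrix.IsSymm, mexp_transpose, hX]

lemma isSymm_smul {X : Matrix (Fin n) (Fin n) ℝ} (hX : X.IsSymm) (c : ℝ) :
    (c • X).IsSymm := by
  rw [Matrix.IsSymm, Matrix.transpose_smul, hX]

lemma mexp_double (X : Matrix (Fin n) (Fin n) ℝ) :
    mexp (X + X) = mexp X * mexp X :=
  Matrix.exp_add_of_commute X X (Commute.refl X)

lemma mexp_conj {R : Matrix (Fin n) (Fin n) ℝ} (hRu : IsUnit R) (A : Matrix (Fin n) (Fin n) ℝ) :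
    mexp (R * A * R⁻¹) = R * mexp A * R⁻¹ :=
  Matrix.exp_conj R A hRu

lemma mexp_neg (A : Matrix (Fin n) (Fin n) ℝ) : mexp (-A) = (mexp A)⁻¹ :=
  Matrix.exp_neg A

lemma isSymm_conj_neg {R L : Matrix (Fin n) (Fin n) ℝ} (hL : L.IsSymm) :
    (R * -L * Rᵀ).IsSymm := by
  rw [Matrix.IsSymm, Matrix.transpose_mul, Matrix.transpose_mul, Matrix.transpose_transpose,
    Matrix.transpose_neg, hL, Matrix.mul_assoc]

lemma mexp_isUnit (X : Matrix (Fin n) (Fin n) ℝ) : IsUnit (mexp X) :=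
  Matrix.isUnit_exp X

lemma posDef_conjT_mul_self {B : Matrix (Fin n) (Fin n) ℝ} (hB : IsUnit B) :
    (Bᴴ * B).PosDef :=
  Matrix.PosDef.conjTranspose_mul_self B (Matrix.mulVec_injective_iff_isUnit.mpr hB)

open scoped MatrixOrder in
lemma psd_eq_of_sq_eq_sq {A B : Matrix (Fin n) (Fin n) ℝ} (hA : A.PosSemidef) (hB : B.PosSemidef)
    (h : A ^ 2 = B ^ 2) : A = B :=
  (CFC.sq_eq_sq_iff A B hA.nonneg hB.nonneg).mp h

lemma mexp_posDef {X : Matrix (Fin n) (Fin n) ℝ} (hX : X.IsSymm) : (mexp X).PosDef := by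
  have h2 : ((2⁻¹ : ℝ) • X).IsSymm := isSymm_smul hX _
  have hhalf : mexp ((2⁻¹ : ℝ) • X) * mexp ((2⁻¹ : ℝ) • X) = mexp X := by
    rw [← mexp_double, ← add_smul]
    norm_num
  have hA : mexp X = (mexp ((2⁻¹ : ℝ) • X))ᴴ * mexp ((2⁻¹ : ℝ) • X) := by
    rw [Matrix.conjTranspose_eq_transpose_of_trivial, (mexp_isSymm h2), hhalf]
  rw [hA]
  exact posDef_conjT_mul_self (mexp_isUnit _)

lemma mexp_inj_symm {X Y : Matrix (Fin n) (Fin n) ℝ} (hX : X.IsSymm) (hY : Y.IsSymm)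
    (h : mexp X = mexp Y) : X = Y := by
  have key : ∀ k : ℕ, mexp (((2:ℝ)⁻¹) ^ k • X) = mexp (((2:ℝ)⁻¹) ^ k • Y) := by
    intro k
    induction k with
    | zero => simpa using h
    | succ k ih =>
      have hXk : (((2:ℝ)⁻¹) ^ (k + 1) • X).IsSymm := isSymm_smul hX _
      have hYk : (((2:ℝ)⁻¹) ^ (k + 1) • Y).IsSymm := isSymm_smul hY _
      refine psd_eq_of_sq_eq_sq (mexp_posDef hXk).posSemidef (mexp_posDef hYk).posSemidef ?_
      have hdX : ((2:ℝ)⁻¹) ^ (k + 1) • X + ((2:ℝ)⁻¹) ^ (k + 1) • X = ((2:ℝ)⁻¹) ^ k • X := by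
        rw [← add_smul]; ring_nf
      have hdY : ((2:ℝ)⁻¹) ^ (k + 1) • Y + ((2:ℝ)⁻¹) ^ (k + 1) • Y = ((2:ℝ)⁻¹) ^ k • Y := by
        rw [← add_smul]; ring_nf
      rw [pow_two, pow_two, ← mexp_double, ← mexp_double, hdX, hdY, ih]
  -- now pass to the limit
  letI : SeminormedRing (Matrix (Fin n) (Fin n) ℝ) := Matrix.linftyOpSemiNormedRing
  letI : NormedRing (Matrix (Fin n) (Fin n) ℝ) := Matrix.linftyOpNormedRing
  letI : NormedAlgebra ℝ (Matrix (Fin n) (Fin n) ℝ) := Matrix.linftyOpNormedAlgebra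
  have hdX : HasDerivAt (fun t : ℝ => mexp (t • X)) X 0 := by
    have h := hasDerivAt_exp_smul_const (𝕂 := ℝ) X 0
    simp at h
    exact h
  have hdY : HasDerivAt (fun t : ℝ => mexp (t • Y)) Y 0 := by
    have h := hasDerivAt_exp_smul_const (𝕂 := ℝ) Y 0
    simp at h
    exact h
  have hseq : Filter.Tendsto (fun k : ℕ => ((2:ℝ)⁻¹) ^ k) Filter.atTop (nhdsWithin 0 {(0:ℝ)}ᶜ) := by
    apply Filter.Tendsto.mono_right ?_ le_rfl |>.mono_left le_rfl
    rw [tendsto_nhdsWithin_iff]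
    constructor
    · exact tendsto_pow_atTop_nhds_zero_of_lt_one (by norm_num) (by norm_num)
    · exact Filter.Eventually.of_forall fun k => by
        simp only [Set.mem_compl_iff, Set.mem_singleton_iff]
        positivity
  have hX' := (hasDerivAt_iff_tendsto_slope.mp hdX).comp hseq
  have hY' := (hasDerivAt_iff_tendsto_slope.mp hdY).comp hseq
  have heq : (slope (fun t : ℝ => mexp (t • X)) 0) ∘ (fun k : ℕ => ((2:ℝ)⁻¹) ^ k) =
      (slope (fun t : ℝ => mexp (t • Y)) 0) ∘ (fun k : ℕ => ((2:ℝ)⁻¹) ^ k) := by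
    funext k
    simp only [Function.comp_apply, slope_def_module]
    rw [key k, zero_smul, zero_smul]
  rw [heq] at hX'
  exact tendsto_nhds_unique hX' hY'

lemma exists_symm_log {P : Matrix (Fin n) (Fin n) ℝ} (hP : P.PosDef) :
    ∃ X : Matrix (Fin n) (Fin n) ℝ, X.IsSymm ∧ mexp X = P := by
  have hH : P.IsHermitian := hP.isHermitian
  set V : Matrix (Fin n) (Fin n) ℝ := (hH.eigenvectorUnitary : Matrix (Fin n) (Fin n) ℝ) with hV
  have hVmem : V ∈ Matrix.unitaryGroup (Fin n) ℝ := hH.eigenvectorUnitary.2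
  have hVV : V * star V = 1 := (Matrix.mem_unitaryGroup_iff).mp hVmem
  have hVV' : star V * V = 1 := (Matrix.mem_unitaryGroup_iff').mp hVmem
  have hVunit : IsUnit V := ⟨⟨V, star V, hVV, hVV'⟩, rfl⟩
  have hVinv : V⁻¹ = star V := Matrix.inv_eq_right_inv hVV
  set D : Matrix (Fin n) (Fin n) ℝ := Matrix.diagonal (fun i => Real.log (hH.eigenvalues i)) with hD
  refine ⟨V * D * star V, ?_, ?_⟩
  · have hherm : (V * D * star V).IsHermitian := by
      have : (V * D * Vᴴ).IsHermitian :=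
        Matrix.isHermitian_mul_mul_conjTranspose V
          (Matrix.isHermitian_diagonal _)
      simpa [Matrix.star_eq_conjTranspose] using this
    rw [Matrix.IsSymm, ← Matrix.conjTranspose_eq_transpose_of_trivial]
    exact hherm
  · have h1 : mexp (V * D * star V) = V * mexp D * star V := by
      rw [← hVinv]
      exact Matrix.exp_conj V D hVunit
    rw [h1]
    have h2 : mexp D = Matrix.diagonal (fun i => hH.eigenvalues i) := by
      have hfun : (NormedSpace.exp fun i => Real.log (hH.eigenvalues i)) =
          fun i => hH.eigenvalues i := by
        rw [Pi.exp_def]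
        funext i
        rw [← Real.exp_eq_exp_ℝ, Real.exp_log (hP.eigenvalues_pos i)]
      rw [hD, mexp, Matrix.exp_diagonal, hfun]
    rw [h2]
    conv_rhs => rw [hH.spectral_theorem]
    simp [RCLike.ofReal_real_eq_id]
    rfl

lemma matLog_eq {P X : Matrix (Fin n) (Fin n) ℝ} (hX : X.IsSymm) (hXP : mexp X = P) :
    matLog P = X := by
  have hex : ∃ Z : Matrix (Fin n) (Fin n) ℝ, Z.IsSymm ∧ mexp Z = P := ⟨X, hX, hXP⟩
  rw [matLog, dif_pos hex]
  exact mexp_inj_symm hex.choose_spec.1 hX (hex.choose_spec.2.trans hXP.symm)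

lemma conj_mul {R A B : Matrix (Fin n) (Fin n) ℝ} (hR : Rᵀ * R = 1) :
    (R * A * Rᵀ) * (R * B * Rᵀ) = R * (A * B) * Rᵀ := by
  simp only [Matrix.mul_assoc]
  rw [← Matrix.mul_assoc Rᵀ R (B * Rᵀ), hR, Matrix.one_mul]

lemma trace_conj {R : Matrix (Fin n) (Fin n) ℝ} (hR : Rᵀ * R = 1)
    (A : Matrix (Fin n) (Fin n) ℝ) : (R * A * Rᵀ).trace = A.trace := by
  rw [Matrix.trace_mul_cycle, hR, Matrix.one_mul]

lemma frobSq_conj {R : Matrix (Fin n) (Fin n) ℝ} (hR : Rᵀ * R = 1)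
    (A : Matrix (Fin n) (Fin n) ℝ) : frobSq (R * A * Rᵀ) = frobSq A := by
  have h1 : (R * A * Rᵀ)ᵀ = R * Aᵀ * Rᵀ := by
    rw [Matrix.transpose_mul, Matrix.transpose_mul, Matrix.transpose_transpose,
      Matrix.mul_assoc]
  rw [frobSq, h1, conj_mul hR, trace_conj hR]
  rfl

lemma devPart_conj {R : Matrix (Fin n) (Fin n) ℝ} (hR : Rᵀ * R = 1) (hR' : R * Rᵀ = 1)
    (A : Matrix (Fin n) (Fin n) ℝ) : devPart (R * A * Rᵀ) = R * devPart A * Rᵀ := by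
  rw [devPart, devPart, trace_conj hR, Matrix.mul_sub, Matrix.sub_mul]
  congr 1
  rw [Matrix.mul_smul, Matrix.smul_mul, Matrix.mul_one, hR']

lemma frobSq_neg (A : Matrix (Fin n) (Fin n) ℝ) : frobSq (-A) = frobSq A := by
  simp [frobSq]

lemma devPart_neg (A : Matrix (Fin n) (Fin n) ℝ) : devPart (-A) = -devPart A := by
  simp only [devPart, Matrix.trace_neg, neg_div, neg_smul, sub_eq_add_neg, neg_add, neg_neg]

end TCSaux

open TCSaux

/-- Tension-compression symmetry of energies expressed in the logarithmic strain measures. -/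
theorem tension_compression_symmetry {n : ℕ} (Ψ : ℝ → ℝ → ℝ)
    {F U U' : Matrix (Fin n) (Fin n) ℝ}
    (hFdet : 0 < F.det) (hU : U.PosDef) (hU2 : U * U = Fᵀ * F)
    (hU' : U'.PosDef) (hU'2 : U' * U' = (F⁻¹)ᵀ * F⁻¹) :
    Ψ (frobNorm (devPart (matLog U'))) |(matLog U').trace| =
      Ψ (frobNorm (devPart (matLog U))) |(matLog U).trace| := by
  classical
  -- the symmetric logarithm of U
  obtain ⟨L, hLs, hLe⟩ := exists_symm_log hU
  have hLU : matLog U = L := matLog_eq hLs hLe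
  -- invertibility facts
  have hFunit : IsUnit F := (Matrix.isUnit_iff_isUnit_det F).mpr hFdet.ne'.isUnit
  have hFTunit : IsUnit Fᵀ := (Matrix.isUnit_iff_isUnit_det Fᵀ).mpr (by
    rw [Matrix.det_transpose]; exact hFdet.ne'.isUnit)
  have hUunit : IsUnit U := hU.isUnit
  have hUdet : IsUnit U.det := (Matrix.isUnit_iff_isUnit_det U).mp hUunit
  have hFdet' : IsUnit F.det := hFdet.ne'.isUnit
  have hFTdet : IsUnit Fᵀ.det := by rw [Matrix.det_transpose]; exact hFdet'
  have hUsymm : Uᵀ = U := by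
    rw [← Matrix.conjTranspose_eq_transpose_of_trivial]; exact hU.isHermitian
  have hUinvT : (U⁻¹)ᵀ = U⁻¹ := by rw [Matrix.transpose_nonsing_inv, hUsymm]
  -- the orthogonal polar factor R = F * U⁻¹
  obtain ⟨R, hRdef⟩ : ∃ R : Matrix (Fin n) (Fin n) ℝ, R = F * U⁻¹ := ⟨_, rfl⟩
  have hRT : Rᵀ = U⁻¹ * Fᵀ := by
    rw [hRdef, Matrix.transpose_mul, hUinvT]
  have hRTR : Rᵀ * R = 1 := by
    rw [hRT, hRdef]
    calc U⁻¹ * Fᵀ * (F * U⁻¹) = U⁻¹ * (Fᵀ * F) * U⁻¹ := by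
          simp only [Matrix.mul_assoc]
      _ = U⁻¹ * (U * U) * U⁻¹ := by rw [hU2]
      _ = 1 := by
          rw [← Matrix.mul_assoc, Matrix.nonsing_inv_mul U hUdet, Matrix.one_mul,
            Matrix.mul_nonsing_inv U hUdet]
  have hRRT : R * Rᵀ = 1 := mul_eq_one_comm.mp hRTR
  have hRunit : IsUnit R := ⟨⟨R, Rᵀ, hRRT, hRTR⟩, rfl⟩
  have hRinv : R⁻¹ = Rᵀ := Matrix.inv_eq_right_inv hRRT
  -- candidate logarithm of U'
  obtain ⟨Mm, hMm⟩ : ∃ Mm : Matrix (Fin n) (Fin n) ℝ, Mm = R * -L * Rᵀ := ⟨_, rfl⟩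
  have hMs : Mm.IsSymm := hMm ▸ isSymm_conj_neg hLs
  have hexpM : mexp Mm = R * U⁻¹ * Rᵀ := by
    rw [hMm, ← hRinv, mexp_conj hRunit, mexp_neg, hLe, hRinv]
  -- (mexp Mm)^2 = U'^2
  have hsq : mexp Mm * mexp Mm = U' * U' := by
    rw [hexpM, conj_mul hRTR, hU'2]
    have hUinv2 : U⁻¹ * U⁻¹ = F⁻¹ * (Fᵀ)⁻¹ := by
      rw [← Matrix.mul_inv_rev, hU2, Matrix.mul_inv_rev]
    have hstep : R * (U⁻¹ * U⁻¹) * Rᵀ = F * ((U⁻¹ * U⁻¹) * (U⁻¹ * U⁻¹)) * Fᵀ := by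
      rw [hRT, hRdef]; simp only [Matrix.mul_assoc]
    rw [hstep, hUinv2, Matrix.transpose_nonsing_inv]
    simp only [Matrix.mul_assoc]
    rw [Matrix.nonsing_inv_mul Fᵀ hFTdet, Matrix.mul_one,
      ← Matrix.mul_assoc F F⁻¹, Matrix.mul_nonsing_inv F hFdet', Matrix.one_mul]
  have hexpM' : mexp Mm = U' :=
    psd_eq_of_sq_eq_sq (mexp_posDef hMs).posSemidef hU'.posSemidef
      (by rw [pow_two, pow_two, hsq])
  have hLU' : matLog U' = Mm := matLog_eq hMs hexpM'
  rw [hLU, hLU']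
  have htr : Mm.trace = -L.trace := by rw [hMm, trace_conj hRTR, Matrix.trace_neg]
  have hdev : devPart Mm = R * (-(devPart L)) * Rᵀ := by
    rw [hMm, devPart_conj hRTR hRRT, devPart_neg]
  have hfs : frobSq (devPart Mm) = frobSq (devPart L) := by
    rw [hdev, frobSq_conj hRTR, frobSq_neg]
  rw [htr, abs_neg, frobNorm, frobNorm, hfs]
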